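/- Let n, s, a1 be integers with 2 ≤ s < a1 ≤ n. Then the sum over all subsets A of {1,…,n} of cardinality a1 of the quantity (s − 1)/(T(A) − 1) equals (a1/n)·C(n, a1); equivalently, the average of w1(A) = (s − 1)/(T(A) − 1) over all such subsets A equals a1/n. (This is the second half of Theorem 1: E(w1) = a1/n, where w1 is the proportion of accepters among students with random number strictly lower than T.) -/

import Mathlib

/-- `kthSmallest A k` is the `k`-th smallest element of the finite set `A`
(so `kthSmallest A 1` is the minimum), obtained as entry `k - 1` of the
increasing enumeration of `A`. In the waiting-list model, for `s ≤ a1 = |A|`,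
`T(A) = kthSmallest A s` is the random number of the last student receiving
an offer, where `A` is the set of positions of accepters. -/
def kthSmallest (A : Finset ℕ) (k : ℕ) : ℕ :=
  (A.sort (· ≤ ·)).getD (k - 1) 0

lemma filter_lt_take {l : List ℕ} (hl : l.Pairwise (· < ·)) (i : ℕ) (hi : i < l.length) :
    l.filter (fun x => decide (x < l[i])) = l.take i := by
  have key : ∀ t, t = l[i] → l.filter (fun x => decide (x < t)) = l.take i := by
    intro t ht
    conv_lhs => rw [← List.take_append_drop i l]
    rw [List.filter_append]
    have h1 : (l.take i).filter (fun x => decide (x < t)) = l.take i := by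
      rw [List.filter_eq_self]
      intro a ha
      rw [List.mem_iff_getElem] at ha
      obtain ⟨j, hj, rfl⟩ := ha
      have hj' : j < i := by rw [List.length_take] at hj; omega
      simp only [List.getElem_take, decide_eq_true_eq, ht]
      exact List.pairwise_iff_getElem.1 hl j i (by omega) hi hj'
    have h2 : (l.drop i).filter (fun x => decide (x < t)) = [] := by
      rw [List.filter_eq_nil_iff]
      intro a ha
      rw [List.mem_iff_getElem] at ha
      obtain ⟨j, hj, rfl⟩ := ha
      simp only [List.getElem_drop, decide_eq_true_eq, not_lt, ht]
      rcases Nat.eq_zero_or_pos j with rfl | hpos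
      · simp
      · exact le_of_lt (List.pairwise_iff_getElem.1 hl i (i + j) hi (by rw [List.length_drop] at hj; omega) (by omega))
    rw [h1, h2, List.append_nil]
  exact key _ rfl

lemma card_filter_sort (A : Finset ℕ) (i : ℕ) (hi : i < (A.sort (· ≤ ·)).length) :
    (A.filter (fun x => x < (A.sort (· ≤ ·))[i])).card = i := by
  have h1 : (A.filter (fun x => x < (A.sort (· ≤ ·))[i])).card
      = ((A.sort (· ≤ ·)).filter (fun x => decide (x < (A.sort (· ≤ ·))[i]))).length := by
    rw [← Multiset.coe_card, ← Multiset.filter_coe, Finset.sort_eq]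
    rfl
  rw [h1, filter_lt_take (List.sortedLT_iff_pairwise.1 (Finset.sortedLT_sort A)) i hi, List.length_take]
  omega

lemma kthSmallest_eq_iff {A : Finset ℕ} {k t : ℕ} (hk1 : 1 ≤ k) (hk : k ≤ A.card) :
    kthSmallest A k = t ↔ t ∈ A ∧ (A.filter (fun x => x < t)).card = k - 1 := by
  have hlen : (A.sort (· ≤ ·)).length = A.card := Finset.length_sort _
  have hki : k - 1 < (A.sort (· ≤ ·)).length := by omega
  have hval : kthSmallest A k = (A.sort (· ≤ ·))[k-1] := List.getD_eq_getElem _ _ hki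
  constructor
  · rintro rfl
    rw [hval]
    refine ⟨(Finset.mem_sort (· ≤ ·)).1 (List.getElem_mem hki), card_filter_sort A _ hki⟩
  · rintro ⟨htA, hcard⟩
    have : t ∈ A.sort (· ≤ ·) := (Finset.mem_sort (· ≤ ·)).2 htA
    obtain ⟨j, hj, rfl⟩ := List.mem_iff_getElem.1 this
    have := card_filter_sort A j hj
    have hjk : j = k - 1 := by omega
    rw [hval]; congr 1; omega

lemma fiber_card {n s a1 t : ℕ} (hs : 2 ≤ s) (hsa : s ≤ a1) (hst : s ≤ t) (htn : t ≤ n) :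
    (((Finset.Icc 1 n).powersetCard a1).filter (fun A => kthSmallest A s = t)).card
      = (t - 1).choose (s - 1) * (n - t).choose (a1 - s) := by
  have e1 : ((Finset.Icc 1 (t-1)).powersetCard (s-1)).card = (t-1).choose (s-1) := by
    rw [Finset.card_powersetCard, Nat.card_Icc]
    congr 1
  have e2 : ((Finset.Icc (t+1) n).powersetCard (a1-s)).card = (n-t).choose (a1-s) := by
    rw [Finset.card_powersetCard, Nat.card_Icc]
    congr 1
    omega
  rw [← e1, ← e2, ← Finset.card_product]
  apply Finset.card_nbij'
    (fun A => (A.filter (fun x => x < t), A.filter (fun x => t < x)))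
    (fun p => p.1 ∪ insert t p.2)
  · -- forward membership
    intro A hA
    rw [Finset.mem_coe, Finset.mem_filter, Finset.mem_powersetCard] at hA
    obtain ⟨⟨hsub, hcard⟩, hT⟩ := hA
    have hiff := (kthSmallest_eq_iff (by omega : 1 ≤ s) (by omega : s ≤ A.card)).1 hT
    obtain ⟨htA, hflt⟩ := hiff
    have hmem : ∀ x ∈ A, 1 ≤ x ∧ x ≤ n := by
      intro x hx
      exact Finset.mem_Icc.1 (hsub hx)
    have key := Finset.card_filter_add_card_filter_not (p := fun x => x < t) (s := A)
    have hneg : A.filter (fun x => ¬ x < t) = insert t (A.filter (fun x => t < x)) := by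
      ext x
      simp only [Finset.mem_filter, Finset.mem_insert, not_lt]
      constructor
      · rintro ⟨hx, hle⟩
        rcases eq_or_lt_of_le hle with h | h
        · exact Or.inl h.symm
        · exact Or.inr ⟨hx, h⟩
      · rintro (rfl | ⟨hx, h⟩)
        · exact ⟨htA, le_refl _⟩
        · exact ⟨hx, le_of_lt h⟩
    have hnotmem : t ∉ A.filter (fun x => t < x) := by simp
    rw [hneg, Finset.card_insert_of_notMem hnotmem, hflt, hcard] at key
    rw [Finset.mem_coe, Finset.mem_product, Finset.mem_powersetCard, Finset.mem_powersetCard]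
    refine ⟨⟨?_, hflt⟩, ?_, show (A.filter (fun x => t < x)).card = a1 - s by omega⟩
    · intro x hx
      rw [Finset.mem_filter] at hx
      rw [Finset.mem_Icc]
      have := hmem x hx.1
      omega
    · intro x hx
      rw [Finset.mem_filter] at hx
      rw [Finset.mem_Icc]
      have := hmem x hx.1
      omega
  · -- backward membership
    intro p hp
    rw [Finset.mem_coe, Finset.mem_product, Finset.mem_powersetCard, Finset.mem_powersetCard] at hp
    obtain ⟨⟨hB, hBc⟩, hC, hCc⟩ := hp
    have hBlt : ∀ x ∈ p.1, x < t := by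
      intro x hx
      have := Finset.mem_Icc.1 (hB hx)
      omega
    have hCgt : ∀ x ∈ p.2, t < x ∧ x ≤ n := by
      intro x hx
      have := Finset.mem_Icc.1 (hC hx)
      omega
    have htC : t ∉ p.2 := fun h => by have := hCgt t h; omega
    have hdisj : Disjoint p.1 (insert t p.2) := by
      rw [Finset.disjoint_left]
      intro x hx hx2
      rcases Finset.mem_insert.1 hx2 with rfl | hx2
      · exact absurd (hBlt x hx) (lt_irrefl _)
      · have := hCgt x hx2
        have := hBlt x hx
        omega
    have hcard : (p.1 ∪ insert t p.2).card = a1 := by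
      rw [Finset.card_union_of_disjoint hdisj, Finset.card_insert_of_notMem htC, hBc, hCc]
      omega
    have hfB : (p.1 ∪ insert t p.2).filter (fun x => x < t) = p.1 := by
      ext x
      simp only [Finset.mem_filter, Finset.mem_union, Finset.mem_insert]
      constructor
      · rintro ⟨h1 | (rfl | h1), h2⟩
        · exact h1
        · omega
        · have := hCgt x h1; omega
      · intro hx
        exact ⟨Or.inl hx, hBlt x hx⟩
    rw [Finset.mem_coe, Finset.mem_filter, Finset.mem_powersetCard]
    refine ⟨⟨?_, hcard⟩, ?_⟩
    · intro x hx
      rw [Finset.mem_Icc]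
      rcases Finset.mem_union.1 hx with h | h
      · have := Finset.mem_Icc.1 (hB h); omega
      · rcases Finset.mem_insert.1 h with rfl | h
        · omega
        · have := hCgt x h; omega
    · refine (kthSmallest_eq_iff (by omega) (by beta_reduce; omega)).2 ⟨?_, ?_⟩
      · exact Finset.mem_union_right _ (Finset.mem_insert_self _ _)
      · rw [hfB, hBc]
  · -- left inverse
    intro A hA
    rw [Finset.mem_coe, Finset.mem_filter, Finset.mem_powersetCard] at hA
    obtain ⟨⟨hsub, hcard⟩, hT⟩ := hA
    have htA := ((kthSmallest_eq_iff (by omega : 1 ≤ s) (by omega : s ≤ A.card)).1 hT).1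
    ext x
    simp only [Finset.mem_union, Finset.mem_insert, Finset.mem_filter]
    constructor
    · rintro (⟨h, _⟩ | (rfl | ⟨h, _⟩)) <;> first | exact h | exact htA
    · intro hx
      rcases lt_trichotomy x t with h | rfl | h
      · exact Or.inl ⟨hx, h⟩
      · exact Or.inr (Or.inl rfl)
      · exact Or.inr (Or.inr ⟨hx, h⟩)
  · -- right inverse
    intro p hp
    rw [Finset.mem_coe, Finset.mem_product, Finset.mem_powersetCard, Finset.mem_powersetCard] at hp
    obtain ⟨⟨hB, hBc⟩, hC, hCc⟩ := hp
    have hBlt : ∀ x ∈ p.1, x < t := by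
      intro x hx
      have := Finset.mem_Icc.1 (hB hx)
      omega
    have hCgt : ∀ x ∈ p.2, t < x := by
      intro x hx
      have := Finset.mem_Icc.1 (hC hx)
      omega
    have h1 : (p.1 ∪ insert t p.2).filter (fun x => x < t) = p.1 := by
      ext x
      simp only [Finset.mem_filter, Finset.mem_union, Finset.mem_insert]
      constructor
      · rintro ⟨h1 | (rfl | h1), h2⟩
        · exact h1
        · omega
        · have := hCgt x h1; omega
      · intro hx
        exact ⟨Or.inl hx, hBlt x hx⟩
    have h2 : (p.1 ∪ insert t p.2).filter (fun x => t < x) = p.2 := by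
      ext x
      simp only [Finset.mem_filter, Finset.mem_union, Finset.mem_insert]
      constructor
      · rintro ⟨h1 | (rfl | h1), h2⟩
        · have := hBlt x h1; omega
        · omega
        · exact h1
      · intro hx
        exact ⟨Or.inr (Or.inr hx), hCgt x hx⟩
    exact Prod.ext h1 h2

lemma conv_choose : ∀ (m k l : ℕ),
    ∑ j ∈ Finset.range (m+1), j.choose k * (m-j).choose l = (m+1).choose (k+l+1) := by
  intro m
  induction m with
  | zero =>
    intro k l
    cases k with
    | zero => cases l with
      | zero => simp
      | succ l => simp [Nat.choose_eq_zero_of_lt]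
    | succ k => simp [Nat.choose_eq_zero_of_lt, Nat.choose_eq_zero_of_lt (by omega : 1 < k+l+2)]
  | succ m ih =>
    intro k l
    cases l with
    | zero =>
      simp only [Nat.choose_zero_right, mul_one]
      have hsub : Finset.Icc k (m+1) ⊆ Finset.range (m+2) := by
        intro x hx
        rw [Finset.mem_Icc] at hx
        rw [Finset.mem_range]
        omega
      rw [← Finset.sum_subset hsub (fun x hx hnx => Nat.choose_eq_zero_of_lt (by
        rw [Finset.mem_range] at hx; rw [Finset.mem_Icc] at hnx; omega)),
        Nat.sum_Icc_choose]
    | succ l =>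
      rw [Finset.sum_range_succ]
      have step : ∀ j ∈ Finset.range (m+1),
          j.choose k * (m+1-j).choose (l+1)
            = j.choose k * (m-j).choose l + j.choose k * (m-j).choose (l+1) := by
        intro j hj
        rw [Finset.mem_range] at hj
        have : m + 1 - j = (m - j) + 1 := by omega
        rw [this, Nat.choose_succ_succ, Nat.mul_add]
      rw [Finset.sum_congr rfl step, Finset.sum_add_distrib, ih k l, ih k (l+1)]
      simp only [Nat.sub_self, Nat.choose_eq_zero_of_lt (Nat.succ_pos l), Nat.mul_zero, Nat.add_zero]
      exact (Nat.choose_succ_succ (m+1) (k+l+1)).symm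

lemma sum_fiber_nat (n s a1 : ℕ) (hs : 2 ≤ s) (hsa : s < a1) (han : a1 ≤ n) :
    ∑ t ∈ Finset.Icc s n, (t-2).choose (s-2) * (n-t).choose (a1-s)
      = (n-1).choose (a1-1) := by
  have hsub : Finset.Icc s n ⊆ Finset.Icc 2 n := by
    intro x hx
    rw [Finset.mem_Icc] at *
    omega
  rw [Finset.sum_subset hsub (fun x hx hnx => by
    rw [Finset.mem_Icc] at hx hnx
    rw [Nat.choose_eq_zero_of_lt (by omega : x - 2 < s - 2), zero_mul])]
  rw [← Finset.Ico_add_one_right_eq_Icc, Finset.sum_Ico_eq_sum_range]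
  have hn : n + 1 - 2 = (n - 2) + 1 := by omega
  rw [hn]
  have congr1 : ∀ j ∈ Finset.range ((n-2)+1),
      (2 + j - 2).choose (s-2) * (n - (2 + j)).choose (a1-s)
        = j.choose (s-2) * ((n-2) - j).choose (a1-s) := by
    intro j hj
    congr 2 <;> omega
  rw [Finset.sum_congr rfl congr1, conv_choose]
  congr 1 <;> omega

/-- **Theorem 1, second half: E(w₁) = a1/n.**
For integers `2 ≤ s < a1 ≤ n`, the sum over all subsets `A` of `{1,…,n}` of
cardinality `a1` of `w₁(A) = (s − 1)/(T(A) − 1)` (the proportion of accepters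
among students with random number strictly lower than `T(A)`) equals
`(a1/n)·C(n, a1)`; i.e. the average of `w₁` over all such subsets is `a1/n`. -/
theorem expectation_w1 (n s a1 : ℕ) (hs : 2 ≤ s) (hsa : s < a1) (han : a1 ≤ n) :
    ∑ A ∈ (Finset.Icc 1 n).powersetCard a1,
      ((s : ℚ) - 1) / ((kthSmallest A s : ℚ) - 1)
      = ((a1 : ℚ) / (n : ℚ)) * (n.choose a1 : ℚ) := by
  classical
  have hmaps : ∀ A ∈ (Finset.Icc 1 n).powersetCard a1,
      kthSmallest A s ∈ Finset.Icc s n := by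
    intro A hA
    rw [Finset.mem_powersetCard] at hA
    obtain ⟨hsub, hcard⟩ := hA
    obtain ⟨htA, hflt⟩ := (kthSmallest_eq_iff (by omega : 1 ≤ s)
      (by omega : s ≤ A.card)).1 (rfl : kthSmallest A s = kthSmallest A s)
    set T := kthSmallest A s with hT
    have hTn : T ∈ Finset.Icc 1 n := hsub htA
    rw [Finset.mem_Icc] at hTn
    have hss : A.filter (fun x => x < T) ⊆ Finset.Icc 1 (T-1) := by
      intro x hx
      rw [Finset.mem_filter] at hx
      have := Finset.mem_Icc.1 (hsub hx.1)
      rw [Finset.mem_Icc]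
      omega
    have hle := Finset.card_le_card hss
    rw [hflt, Nat.card_Icc] at hle
    rw [Finset.mem_Icc]
    omega
  rw [← Finset.sum_fiberwise_of_maps_to hmaps]
  have inner : ∀ t ∈ Finset.Icc s n,
      (∑ A ∈ ((Finset.Icc 1 n).powersetCard a1).filter (fun A => kthSmallest A s = t),
        ((s : ℚ) - 1) / ((kthSmallest A s : ℚ) - 1))
      = (((t-2).choose (s-2) * (n-t).choose (a1-s) : ℕ) : ℚ) := by
    intro t ht
    rw [Finset.mem_Icc] at ht
    have hcongr : ∀ A ∈ ((Finset.Icc 1 n).powersetCard a1).filter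
        (fun A => kthSmallest A s = t),
        ((s : ℚ) - 1) / ((kthSmallest A s : ℚ) - 1) = ((s : ℚ) - 1) / ((t : ℚ) - 1) := by
      intro A hA
      rw [(Finset.mem_filter.1 hA).2]
    rw [Finset.sum_congr rfl hcongr, Finset.sum_const,
      fiber_card hs (le_of_lt hsa) ht.1 ht.2, nsmul_eq_mul]
    have hnat : (t-1) * ((t-2).choose (s-2)) = (t-1).choose (s-1) * (s-1) := by
      have h := Nat.add_one_mul_choose_eq (t-2) (s-2)
      have e1 : t - 2 + 1 = t - 1 := by omega
      have e2 : t - 2 + 1 = t - 1 := by omega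
      have e3 : s - 2 + 1 = s - 1 := by omega
      rw [e1, e3] at h
      exact h
    have ht1 : ((t : ℚ) - 1) = ((t - 1 : ℕ) : ℚ) := by
      have : (1:ℚ) ≤ (t:ℚ) := by exact_mod_cast Nat.one_le_iff_ne_zero.2 (by omega)
      push_cast [Nat.cast_sub (show 1 ≤ t by omega)]
      ring
    have hs1 : ((s : ℚ) - 1) = ((s - 1 : ℕ) : ℚ) := by
      push_cast [Nat.cast_sub (show 1 ≤ s by omega)]
      ring
    have htne : ((t - 1 : ℕ) : ℚ) ≠ 0 := by
      exact_mod_cast (by omega : t - 1 ≠ 0)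
    rw [ht1, hs1, mul_div_assoc', div_eq_iff htne]
    have hnat' : (t-1).choose (s-1) * (n-t).choose (a1-s) * (s-1)
        = (t-2).choose (s-2) * (n-t).choose (a1-s) * (t-1) := by
      rw [mul_right_comm, ← hnat]
      ring
    exact_mod_cast hnat'
  rw [Finset.sum_congr rfl inner, ← Nat.cast_sum, sum_fiber_nat n s a1 hs hsa han]
  -- ((n-1).choose (a1-1) : ℚ) = (a1/n) * n.choose a1
  have hnat2 : n * ((n-1).choose (a1-1)) = n.choose a1 * a1 := by
    have h := Nat.add_one_mul_choose_eq (n-1) (a1-1)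
    have e1 : n - 1 + 1 = n := by omega
    have e2 : a1 - 1 + 1 = a1 := by omega
    rw [e1, e2] at h
    exact h
  have hn0 : (n : ℚ) ≠ 0 := by
    exact_mod_cast (by omega : n ≠ 0)
  rw [div_mul_eq_mul_div, eq_div_iff hn0]
  have hnat3 : (n-1).choose (a1-1) * n = a1 * n.choose a1 := by
    rw [mul_comm, hnat2, mul_comm]
  exact_mod_cast hnat3
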